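/- Fix q ∈ (0,1), ν ∈ [0,1), α > 0 and a function g : ℤ → ℕ. On a probability space, let (B_m)_{m∈ℤ} and (B'_m)_{m∈ℤ} be a mutually independent family of random variables where B_m is Bernoulli with success probability α(1−q^{g(m)})/(1+α) and B'_m is Bernoulli with success probability (α+νq^{g(m)})/(1+α). For n ∈ ℤ let K_n := Σ_{m ≤ n} (∏_{j=m+1}^{n} (B'_j − B_j)) · B_m (the series converges absolutely almost surely and in L^1). Then E(K_n) = Σ_{m ≤ n} (∏_{j=m+1}^{n} ((ν+α)q^{g(j)})/(1+α)) · (α(1−q^{g(m)})/(1+α)), where the series on the right converges absolutely. -/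

import Mathlib

open MeasureTheory ProbabilityTheory

lemma kpz_prod_indep_integral {Ω : Type*} [MeasurableSpace Ω] (μ : Measure Ω)
    [IsProbabilityMeasure μ]
    (B B' : ℤ → Ω → ℝ)
    (hBmeas : ∀ m, Measurable (B m)) (hB'meas : ∀ m, Measurable (B' m))
    (hindep : iIndepFun (Sum.elim B B') μ)
    (φ : ℤ → ℝ → ℝ → ℝ) (hφ : ∀ j, Measurable (fun p : ℝ × ℝ => φ j p.1 p.2))
    (s : Finset ℤ) (m : ℤ) (hm : m ∉ s) :
    ∫ ω, (∏ j ∈ s, φ j (B j ω) (B' j ω)) * B m ω ∂μ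
      = (∏ j ∈ s, ∫ ω, φ j (B j ω) (B' j ω) ∂μ) * ∫ ω, B m ω ∂μ := by
  classical
  have hmeas : ∀ i : ℤ ⊕ ℤ, Measurable (Sum.elim B B' i) := by
    rintro (i | i); exacts [hBmeas i, hB'meas i]
  induction s using Finset.induction_on with
  | empty => simp
  | @insert a t ha ih =>
    have hmt : m ∉ t := fun h => hm (Finset.mem_insert_of_mem h)
    have hma : m ≠ a := fun h => hm (h ▸ Finset.mem_insert_self a t)
    set S : Finset (ℤ ⊕ ℤ) := {Sum.inl a, Sum.inr a} with hS
    set T : Finset (ℤ ⊕ ℤ) := insert (Sum.inl m) (t.image Sum.inl ∪ t.image Sum.inr) with hT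
    have hST : Disjoint S T := by
      rw [Finset.disjoint_left]
      intro x hxS hxT
      simp only [hS, hT, Finset.mem_insert, Finset.mem_singleton, Finset.mem_union,
        Finset.mem_image] at hxS hxT
      rcases hxS with rfl | rfl <;> rcases hxT with h | (⟨y, hy, h⟩ | ⟨y, hy, h⟩) <;>
        simp_all <;> omega
    have h0 := hindep.indepFun_finset S T hST hmeas
    -- compose
    have hinlaS : Sum.inl a ∈ S := by simp [hS]
    have hinraS : Sum.inr a ∈ S := by simp [hS]
    have hinlmT : Sum.inl m ∈ T := by simp [hT]
    have hmemlT : ∀ j ∈ t, Sum.inl j ∈ T := fun j hj => by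
      simp [hT, Finset.mem_union]; tauto
    have hmemrT : ∀ j ∈ t, Sum.inr j ∈ T := fun j hj => by
      simp [hT, Finset.mem_union]; tauto
    set Φ : ((i : S) → ℝ) → ℝ := fun g => φ a (g ⟨Sum.inl a, hinlaS⟩) (g ⟨Sum.inr a, hinraS⟩)
      with hΦ
    set Ψ : ((i : T) → ℝ) → ℝ := fun g =>
      (∏ j ∈ t.attach, φ j.1 (g ⟨Sum.inl j.1, hmemlT j.1 j.2⟩) (g ⟨Sum.inr j.1, hmemrT j.1 j.2⟩))
        * g ⟨Sum.inl m, hinlmT⟩ with hΨ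
    have hΦm : Measurable Φ := by
      have h2 : Measurable fun g : (i : S) → ℝ =>
          (g ⟨Sum.inl a, hinlaS⟩, g ⟨Sum.inr a, hinraS⟩) :=
        (measurable_pi_apply _).prodMk (measurable_pi_apply _)
      exact (hφ a).comp h2
    have hΨm : Measurable Ψ := by
      apply Measurable.mul _ (measurable_pi_apply _)
      apply Finset.measurable_prod
      intro j _
      have h2 : Measurable fun g : (i : T) → ℝ =>
          (g ⟨Sum.inl j.1, hmemlT j.1 j.2⟩, g ⟨Sum.inr j.1, hmemrT j.1 j.2⟩) :=
        (measurable_pi_apply _).prodMk (measurable_pi_apply _)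
      exact (hφ j.1).comp h2
    have h1 : IndepFun (fun ω => Φ (fun i : S => Sum.elim B B' i ω))
        (fun ω => Ψ (fun i : T => Sum.elim B B' i ω)) μ := h0.comp hΦm hΨm
    have hX : (fun ω => Φ (fun i : S => Sum.elim B B' i ω))
        = fun ω => φ a (B a ω) (B' a ω) := rfl
    have hY : (fun ω => Ψ (fun i : T => Sum.elim B B' i ω))
        = fun ω => (∏ j ∈ t, φ j (B j ω) (B' j ω)) * B m ω := by
      funext ω
      simp only [hΨ, Sum.elim_inl, Sum.elim_inr]
      rw [Finset.prod_attach t (fun j => φ j (B j ω) (B' j ω))]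
    rw [hX, hY] at h1
    have hint : ∫ ω, (fun ω => φ a (B a ω) (B' a ω)) ω *
        ((∏ j ∈ t, φ j (B j ω) (B' j ω)) * B m ω) ∂μ
        = (∫ ω, φ a (B a ω) (B' a ω) ∂μ) *
          ∫ ω, (∏ j ∈ t, φ j (B j ω) (B' j ω)) * B m ω ∂μ := by
      have := h1.integral_mul_eq_mul_integral
        (((hφ a).comp ((hBmeas a).prodMk (hB'meas a))).aestronglyMeasurable)
        ((((Finset.measurable_prod t fun j _ => (hφ j).comp
          ((hBmeas j).prodMk (hB'meas j)))).mul (hBmeas m)).aestronglyMeasurable)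
      simpa [Pi.mul_apply] using this
    rw [Finset.prod_insert ha]
    calc ∫ ω, (∏ j ∈ insert a t, φ j (B j ω) (B' j ω)) * B m ω ∂μ
        = ∫ ω, φ a (B a ω) (B' a ω) * ((∏ j ∈ t, φ j (B j ω) (B' j ω)) * B m ω) ∂μ := by
          apply integral_congr_ae
          filter_upwards with ω
          rw [Finset.prod_insert ha]; ring
      _ = (∫ ω, φ a (B a ω) (B' a ω) ∂μ) *
          ∫ ω, (∏ j ∈ t, φ j (B j ω) (B' j ω)) * B m ω ∂μ := hint
      _ = _ := by rw [ih hmt]; ring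

lemma bern_integral {Ω : Type*} [MeasurableSpace Ω] (μ : Measure Ω) [IsProbabilityMeasure μ]
    (X : Ω → ℝ) (hX : Measurable X) (h01 : ∀ ω, X ω = 0 ∨ X ω = 1) :
    Integrable X μ ∧ ∫ ω, X ω ∂μ = (μ {ω | X ω = 1}).toReal := by
  have hset : MeasurableSet {ω | X ω = 1} := hX (measurableSet_singleton 1)
  have hXi : X = Set.indicator {ω | X ω = 1} 1 := by
    funext ω
    rcases h01 ω with h | h <;> simp [Set.indicator, h]
  constructor
  · rw [hXi]
    exact (integrable_indicator_iff hset).2 (integrableOn_const (measure_lt_top μ _).ne)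
  · have h2 := integral_indicator_one (μ := μ) hset
    rw [← hXi] at h2
    exact h2

def kpzEquiv (n : ℤ) : ℕ ≃ {m : ℤ // m ≤ n} :=
  { toFun := fun k => ⟨n - k, by omega⟩
    invFun := fun m => (n - m.1).toNat
    left_inv := fun k => by simp only; omega
    right_inv := fun m => by
      apply Subtype.ext
      simp only
      have := m.2
      omega }


/-- The a.s. limit `K_n = ∑_{m ≤ n} (∏_{j=m+1}^{n} (B'_j − B_j)) · B_m`. -/
noncomputable def kpzKinf {Ω : Type*} (B B' : ℤ → Ω → ℝ) (n : ℤ) (ω : Ω) : ℝ :=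
  ∑' m : {m : ℤ // m ≤ n},
    (∏ j ∈ Finset.Icc ((m : ℤ) + 1) n, (B' j ω - B j ω)) * B (m : ℤ) ω

/-- With `B_m ~ Ber(α(1−q^{g(m)})/(1+α))`, `B'_m ~ Ber((α+νq^{g(m)})/(1+α))`
all mutually independent, `E(K_n) = ∑_{m ≤ n} (∏_{j=m+1}^{n} ((ν+α)q^{g(j)})/(1+α)) ·
(α(1−q^{g(m)})/(1+α))`, the series on the right converging absolutely. -/
theorem kpz_K_expectation
    {Ω : Type*} [MeasurableSpace Ω] (μ : Measure Ω) [IsProbabilityMeasure μ]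
    (q ν α : ℝ) (hq0 : 0 < q) (hq1 : q < 1) (hν0 : 0 ≤ ν) (hν1 : ν < 1) (hα : 0 < α)
    (g : ℤ → ℕ)
    (B B' : ℤ → Ω → ℝ)
    (hBmeas : ∀ m, Measurable (B m)) (hB'meas : ∀ m, Measurable (B' m))
    (hB01 : ∀ m ω, B m ω = 0 ∨ B m ω = 1)
    (hB'01 : ∀ m ω, B' m ω = 0 ∨ B' m ω = 1)
    (hBp : ∀ m, μ {ω | B m ω = 1} = ENNReal.ofReal (α * (1 - q ^ g m) / (1 + α)))
    (hB'p : ∀ m, μ {ω | B' m ω = 1} = ENNReal.ofReal ((α + ν * q ^ g m) / (1 + α)))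
    (hindep : iIndepFun (Sum.elim B B') μ)
    (n : ℤ) :
    (∫ ω, kpzKinf B B' n ω ∂μ) =
      (∑' m : {m : ℤ // m ≤ n},
        (∏ j ∈ Finset.Icc ((m : ℤ) + 1) n, ((ν + α) * q ^ g j) / (1 + α)) *
          (α * (1 - q ^ g (m : ℤ)) / (1 + α))) ∧
    Summable (fun m : {m : ℤ // m ≤ n} =>
      |(∏ j ∈ Finset.Icc ((m : ℤ) + 1) n, ((ν + α) * q ^ g j) / (1 + α)) *
        (α * (1 - q ^ g (m : ℤ)) / (1 + α))|) := by
  classical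
  have h1α : (0:ℝ) < 1 + α := by linarith
  have hQ1 : ∀ j : ℤ, q ^ g j ≤ 1 := fun j => pow_le_one₀ hq0.le hq1.le
  have hQ0 : ∀ j : ℤ, 0 < q ^ g j := fun j => pow_pos hq0 _
  set c : ℝ := 1 - (1 - ν) / (1 + α) ^ 2 with hc
  have hc0 : 0 ≤ c := by
    rw [hc, sub_nonneg]
    rw [div_le_one (pow_pos h1α 2)]
    nlinarith
  have hc1 : c < 1 := by
    rw [hc]
    have : 0 < (1 - ν) / (1 + α) ^ 2 := div_pos (by linarith) (pow_pos h1α 2)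
    linarith
  have hp_nn : ∀ m : ℤ, 0 ≤ α * (1 - q ^ g m) / (1 + α) := fun m => by
    have := hQ1 m
    apply div_nonneg _ h1α.le
    nlinarith
  have hp_le : ∀ m : ℤ, α * (1 - q ^ g m) / (1 + α) ≤ 1 := fun m => by
    rw [div_le_one h1α]
    nlinarith [hQ0 m]
  have hp'_nn : ∀ m : ℤ, 0 ≤ (α + ν * q ^ g m) / (1 + α) := fun m => by
    have := (hQ0 m).le
    positivity
  have hEB : ∀ m, ∫ ω, B m ω ∂μ = α * (1 - q ^ g m) / (1 + α) := fun m => by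
    rw [(bern_integral μ (B m) (hBmeas m) (hB01 m)).2, hBp m,
      ENNReal.toReal_ofReal (hp_nn m)]
  have hEB' : ∀ m, ∫ ω, B' m ω ∂μ = (α + ν * q ^ g m) / (1 + α) := fun m => by
    rw [(bern_integral μ (B' m) (hB'meas m) (hB'01 m)).2, hB'p m,
      ENNReal.toReal_ofReal (hp'_nn m)]
  have hintB : ∀ m, Integrable (B m) μ :=
    fun m => (bern_integral μ (B m) (hBmeas m) (hB01 m)).1
  have hintB' : ∀ m, Integrable (B' m) μ :=
    fun m => (bern_integral μ (B' m) (hB'meas m) (hB'01 m)).1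
  have hEdiff : ∀ j, ∫ ω, (B' j ω - B j ω) ∂μ = ((ν + α) * q ^ g j) / (1 + α) := fun j => by
    rw [integral_sub (hintB' j) (hintB j), hEB', hEB]
    field_simp
    ring
  -- independence of B j and B' j
  have hBB'indep : ∀ j : ℤ, IndepFun (B j) (B' j) μ := fun j =>
    hindep.indepFun (show (Sum.inl j : ℤ ⊕ ℤ) ≠ Sum.inr j by simp)
  -- expectation of |B' j - B j|
  have hEabs_nn : ∀ j, 0 ≤ ∫ ω, |B' j ω - B j ω| ∂μ := fun j =>
    integral_nonneg fun ω => abs_nonneg _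
  have hEabs : ∀ j, ∫ ω, |B' j ω - B j ω| ∂μ ≤ c := by
    intro j
    have habs_eq : (fun ω => |B' j ω - B j ω|)
        = fun ω => B j ω + B' j ω - 2 * (B j ω * B' j ω) := by
      funext ω
      rcases hB01 j ω with h | h <;> rcases hB'01 j ω with h' | h' <;> rw [h, h'] <;> norm_num
    have hmul01 : ∀ ω, B j ω * B' j ω = 0 ∨ B j ω * B' j ω = 1 := fun ω => by
      rcases hB01 j ω with h | h <;> rcases hB'01 j ω with h' | h' <;> rw [h, h'] <;> norm_num
    have hintmul : Integrable (fun ω => B j ω * B' j ω) μ :=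
      (bern_integral μ _ ((hBmeas j).mul (hB'meas j)) hmul01).1
    have hmulval : ∫ ω, B j ω * B' j ω ∂μ
        = (α * (1 - q ^ g j) / (1 + α)) * ((α + ν * q ^ g j) / (1 + α)) := by
      have h2 := (hBB'indep j).integral_mul_eq_mul_integral (hintB j).aestronglyMeasurable
        (hintB' j).aestronglyMeasurable
      rw [hEB, hEB'] at h2
      exact h2
    have hval : ∫ ω, |B' j ω - B j ω| ∂μ
        = (α * (1 - q ^ g j) / (1 + α)) + ((α + ν * q ^ g j) / (1 + α))
          - 2 * ((α * (1 - q ^ g j) / (1 + α)) * ((α + ν * q ^ g j) / (1 + α))) := by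
      have hi1 : Integrable (fun ω => B j ω + B' j ω) μ := (hintB j).add (hintB' j)
      have hi2 : Integrable (fun ω => 2 * (B j ω * B' j ω)) μ := hintmul.const_mul 2
      rw [habs_eq, integral_sub hi1 hi2, integral_add (hintB j) (hintB' j),
        integral_const_mul, hmulval, hEB, hEB']
    rw [hval, hc]
    have hQl := hQ1 j
    have hQg := (hQ0 j).le
    rw [show (α * (1 - q ^ g j) / (1 + α)) + ((α + ν * q ^ g j) / (1 + α))
          - 2 * ((α * (1 - q ^ g j) / (1 + α)) * ((α + ν * q ^ g j) / (1 + α)))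
        = (α * (1 - q ^ g j) * (1 + α) + (α + ν * q ^ g j) * (1 + α)
          - 2 * (α * (1 - q ^ g j) * (α + ν * q ^ g j))) / (1 + α) ^ 2 by
      field_simp]
    rw [show (1:ℝ) - (1 - ν) / (1 + α) ^ 2 = ((1 + α) ^ 2 - (1 - ν)) / (1 + α) ^ 2 by
      field_simp]
    have hAE : (0:ℝ) ≤ (α * (1 - q ^ g j)) * (α + ν * q ^ g j) := by
      apply mul_nonneg
      · nlinarith
      · nlinarith
    have hνQ : (0:ℝ) ≤ 1 - ν * q ^ g j := by nlinarith
    have h5 : (1 - ν : ℝ) ≤ (1 + α * q ^ g j) * (1 - ν * q ^ g j) := by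
      nlinarith [mul_nonneg (mul_nonneg hα.le hQg) hνQ,
        mul_nonneg hν0 (sub_nonneg.2 hQl)]
    rw [div_le_div_iff_of_pos_right (pow_pos h1α 2)]
    nlinarith [hAE, h5]
  -- bookkeeping
  have hnotmem : ∀ m : ℤ, m ∉ Finset.Icc (m + 1) n := fun m => by
    simp [Finset.mem_Icc]
  have hFmeas : ∀ m : {m : ℤ // m ≤ n},
      Measurable (fun ω => (∏ j ∈ Finset.Icc ((m : ℤ) + 1) n, (B' j ω - B j ω)) * B (m : ℤ) ω) :=
    fun m =>
      (Finset.measurable_prod _ fun j _ => (hB'meas j).sub (hBmeas j)).mul (hBmeas (m : ℤ))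
  have habs1 : ∀ (j : ℤ) (ω : Ω), |B' j ω - B j ω| ≤ 1 := fun j ω => by
    rcases hB01 j ω with h | h <;> rcases hB'01 j ω with h' | h' <;> rw [h, h'] <;> norm_num
  have hBnn : ∀ (m : ℤ) (ω : Ω), 0 ≤ B m ω := fun m ω => by
    rcases hB01 m ω with h | h <;> rw [h] <;> norm_num
  have hBle1 : ∀ (m : ℤ) (ω : Ω), B m ω ≤ 1 := fun m ω => by
    rcases hB01 m ω with h | h <;> rw [h] <;> norm_num
  have hFbd : ∀ (m : {m : ℤ // m ≤ n}) (ω : Ω),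
      |(∏ j ∈ Finset.Icc ((m : ℤ) + 1) n, (B' j ω - B j ω)) * B (m : ℤ) ω| ≤ 1 := by
    intro m ω
    rw [abs_mul, Finset.abs_prod]
    have h1 : ∏ j ∈ Finset.Icc ((m : ℤ) + 1) n, |B' j ω - B j ω| ≤ 1 :=
      Finset.prod_le_one (fun j _ => abs_nonneg _) (fun j _ => habs1 j ω)
    have h2 : |B (m : ℤ) ω| ≤ 1 := by
      rw [abs_of_nonneg (hBnn _ ω)]; exact hBle1 _ ω
    calc (∏ j ∈ Finset.Icc ((m : ℤ) + 1) n, |B' j ω - B j ω|) * |B (m : ℤ) ω|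
        ≤ 1 * 1 := mul_le_mul h1 h2 (abs_nonneg _) zero_le_one
      _ = 1 := mul_one 1
  have hFint : ∀ m : {m : ℤ // m ≤ n},
      Integrable (fun ω => (∏ j ∈ Finset.Icc ((m : ℤ) + 1) n, (B' j ω - B j ω)) * B (m : ℤ) ω) μ :=
    fun m =>
      (integrable_const (1 : ℝ)).mono' (hFmeas m).aestronglyMeasurable
        (ae_of_all _ fun ω => by rw [Real.norm_eq_abs]; exact hFbd m ω)
  have hFval : ∀ m : {m : ℤ // m ≤ n},
      ∫ ω, (∏ j ∈ Finset.Icc ((m : ℤ) + 1) n, (B' j ω - B j ω)) * B (m : ℤ) ω ∂μ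
        = (∏ j ∈ Finset.Icc ((m : ℤ) + 1) n, ((ν + α) * q ^ g j) / (1 + α)) *
          (α * (1 - q ^ g (m : ℤ)) / (1 + α)) := by
    intro m
    have h0 := kpz_prod_indep_integral μ B B' hBmeas hB'meas hindep
      (fun _ x y => y - x) (fun j => measurable_snd.sub measurable_fst)
      (Finset.Icc ((m : ℤ) + 1) n) (m : ℤ) (hnotmem (m : ℤ))
    calc ∫ ω, (∏ j ∈ Finset.Icc ((m : ℤ) + 1) n, (B' j ω - B j ω)) * B (m : ℤ) ω ∂μ
        = (∏ j ∈ Finset.Icc ((m : ℤ) + 1) n, ∫ ω, (B' j ω - B j ω) ∂μ) *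
          ∫ ω, B (m : ℤ) ω ∂μ := h0
      _ = _ := by
          rw [hEB]
          congr 1
          exact Finset.prod_congr rfl fun j _ => hEdiff j
  have hFabs : ∀ m : {m : ℤ // m ≤ n},
      ∫ ω, |(∏ j ∈ Finset.Icc ((m : ℤ) + 1) n, (B' j ω - B j ω)) * B (m : ℤ) ω| ∂μ
        ≤ c ^ (Finset.Icc ((m : ℤ) + 1) n).card := by
    intro m
    have heq : (fun ω => |(∏ j ∈ Finset.Icc ((m : ℤ) + 1) n, (B' j ω - B j ω)) * B (m : ℤ) ω|)
        = fun ω => (∏ j ∈ Finset.Icc ((m : ℤ) + 1) n, |B' j ω - B j ω|) * B (m : ℤ) ω := by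
      funext ω
      rw [abs_mul, Finset.abs_prod, abs_of_nonneg (hBnn _ ω)]
    have h0 := kpz_prod_indep_integral μ B B' hBmeas hB'meas hindep
      (fun _ x y => |y - x|) (fun j => (measurable_snd.sub measurable_fst).abs)
      (Finset.Icc ((m : ℤ) + 1) n) (m : ℤ) (hnotmem (m : ℤ))
    have h1 : ∫ ω, |(∏ j ∈ Finset.Icc ((m : ℤ) + 1) n, (B' j ω - B j ω)) * B (m : ℤ) ω| ∂μ
        = (∏ j ∈ Finset.Icc ((m : ℤ) + 1) n, ∫ ω, |B' j ω - B j ω| ∂μ) *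
          ∫ ω, B (m : ℤ) ω ∂μ := by
      rw [heq]; exact h0
    rw [h1]
    have hA : (∏ j ∈ Finset.Icc ((m : ℤ) + 1) n, ∫ ω, |B' j ω - B j ω| ∂μ)
        ≤ c ^ (Finset.Icc ((m : ℤ) + 1) n).card := by
      calc (∏ j ∈ Finset.Icc ((m : ℤ) + 1) n, ∫ ω, |B' j ω - B j ω| ∂μ)
          ≤ ∏ _j ∈ Finset.Icc ((m : ℤ) + 1) n, c :=
            Finset.prod_le_prod (fun j _ => hEabs_nn j) (fun j _ => hEabs j)
        _ = c ^ (Finset.Icc ((m : ℤ) + 1) n).card := Finset.prod_const c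
    have hAnn : 0 ≤ ∏ j ∈ Finset.Icc ((m : ℤ) + 1) n, ∫ ω, |B' j ω - B j ω| ∂μ :=
      Finset.prod_nonneg fun j _ => hEabs_nn j
    have hB1 : ∫ ω, B (m : ℤ) ω ∂μ ≤ 1 := by rw [hEB]; exact hp_le (m : ℤ)
    have hB0 : 0 ≤ ∫ ω, B (m : ℤ) ω ∂μ := by rw [hEB]; exact hp_nn (m : ℤ)
    calc (∏ j ∈ Finset.Icc ((m : ℤ) + 1) n, ∫ ω, |B' j ω - B j ω| ∂μ) * ∫ ω, B (m : ℤ) ω ∂μ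
        ≤ c ^ (Finset.Icc ((m : ℤ) + 1) n).card * 1 :=
          mul_le_mul hA hB1 hB0 (pow_nonneg hc0 _)
      _ = _ := mul_one _
  have hcard : ∀ m : ℤ, (Finset.Icc (m + 1) n).card = (n - m).toNat := fun m => by
    rw [Int.card_Icc]
    congr 1
    omega
  set e : ℕ ≃ {m : ℤ // m ≤ n} := kpzEquiv n with he
  have hnorm : ∀ m : {m : ℤ // m ≤ n},
      ∫⁻ ω, ‖(∏ j ∈ Finset.Icc ((m : ℤ) + 1) n, (B' j ω - B j ω)) * B (m : ℤ) ω‖₊ ∂μ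
        = ENNReal.ofReal
          (∫ ω, |(∏ j ∈ Finset.Icc ((m : ℤ) + 1) n, (B' j ω - B j ω)) * B (m : ℤ) ω| ∂μ) := by
    intro m
    rw [ofReal_integral_eq_lintegral_ofReal (hFint m).abs
      (ae_of_all _ fun ω => abs_nonneg _)]
    simp only [← enorm_eq_nnnorm, Real.enorm_eq_ofReal_abs]
  have hsum_lint : (∑' m : {m : ℤ // m ≤ n},
      ∫⁻ ω, ‖(∏ j ∈ Finset.Icc ((m : ℤ) + 1) n, (B' j ω - B j ω)) * B (m : ℤ) ω‖₊ ∂μ) ≠ ⊤ := by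
    have hle : (∑' m : {m : ℤ // m ≤ n},
        ∫⁻ ω, ‖(∏ j ∈ Finset.Icc ((m : ℤ) + 1) n, (B' j ω - B j ω)) * B (m : ℤ) ω‖₊ ∂μ)
        ≤ ∑' m : {m : ℤ // m ≤ n}, ENNReal.ofReal c ^ (n - (m : ℤ)).toNat := by
      apply ENNReal.tsum_le_tsum
      intro m
      rw [hnorm m, ← ENNReal.ofReal_pow hc0]
      apply ENNReal.ofReal_le_ofReal
      calc ∫ ω, |(∏ j ∈ Finset.Icc ((m : ℤ) + 1) n, (B' j ω - B j ω)) * B (m : ℤ) ω| ∂μ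
          ≤ c ^ (Finset.Icc ((m : ℤ) + 1) n).card := hFabs m
        _ = c ^ (n - (m : ℤ)).toNat := by rw [hcard]
    apply ne_top_of_le_ne_top _ hle
    rw [← Equiv.tsum_eq e (fun m : {m : ℤ // m ≤ n} => ENNReal.ofReal c ^ (n - (m : ℤ)).toNat)]
    have heq2 : (fun k : ℕ => ENNReal.ofReal c ^ (n - ((e k : {m : ℤ // m ≤ n}) : ℤ)).toNat)
        = fun k : ℕ => ENNReal.ofReal c ^ k := by
      funext k
      congr 1
      show (n - (n - (k : ℤ))).toNat = k
      omega
    show (∑' k : ℕ, ENNReal.ofReal c ^ (n - ((e k : {m : ℤ // m ≤ n}) : ℤ)).toNat) ≠ ⊤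
    rw [heq2, ENNReal.tsum_geometric]
    have hlt : ENNReal.ofReal c < 1 := by
      rw [← ENNReal.ofReal_one]
      exact ENNReal.ofReal_lt_ofReal_iff_of_nonneg hc0 |>.2 hc1
    rw [ENNReal.inv_ne_top]
    intro h0
    rw [tsub_eq_zero_iff_le] at h0
    exact absurd h0 (not_le.2 hlt)
  constructor
  · unfold kpzKinf
    rw [integral_tsum (fun m => (hFmeas m).aestronglyMeasurable) hsum_lint]
    exact tsum_congr hFval
  · set r : ℝ := (ν + α) / (1 + α) with hr
    have hr0 : 0 ≤ r := div_nonneg (by linarith) h1α.le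
    have hr1 : r < 1 := by rw [hr, div_lt_one h1α]; linarith
    have hC0 : (0:ℝ) ≤ α / (1 + α) := div_nonneg hα.le h1α.le
    have hle : ∀ m : {m : ℤ // m ≤ n},
        |(∏ j ∈ Finset.Icc ((m : ℤ) + 1) n, ((ν + α) * q ^ g j) / (1 + α)) *
          (α * (1 - q ^ g (m : ℤ)) / (1 + α))|
        ≤ r ^ (n - (m : ℤ)).toNat * (α / (1 + α)) := by
      intro m
      rw [abs_mul, Finset.abs_prod]
      have h1 : (∏ j ∈ Finset.Icc ((m : ℤ) + 1) n, |((ν + α) * q ^ g j) / (1 + α)|)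
          ≤ r ^ (n - (m : ℤ)).toNat := by
        calc (∏ j ∈ Finset.Icc ((m : ℤ) + 1) n, |((ν + α) * q ^ g j) / (1 + α)|)
            ≤ ∏ _j ∈ Finset.Icc ((m : ℤ) + 1) n, r := by
              apply Finset.prod_le_prod (fun j _ => abs_nonneg _)
              intro j _
              rw [abs_of_nonneg (div_nonneg (mul_nonneg (by linarith) (hQ0 j).le) h1α.le),
                hr, div_le_div_iff_of_pos_right h1α]
              nlinarith [hQ0 j, hQ1 j]
          _ = r ^ (Finset.Icc ((m : ℤ) + 1) n).card := Finset.prod_const r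
          _ = r ^ (n - (m : ℤ)).toNat := by rw [hcard]
      have h2 : |α * (1 - q ^ g (m : ℤ)) / (1 + α)| ≤ α / (1 + α) := by
        rw [abs_of_nonneg (hp_nn (m : ℤ)), div_le_div_iff_of_pos_right h1α]
        nlinarith [hQ0 (m : ℤ)]
      exact mul_le_mul h1 h2 (abs_nonneg _) (pow_nonneg hr0 _)
    apply Summable.of_nonneg_of_le (fun m => abs_nonneg _) hle
    rw [← Equiv.summable_iff e]
    have heq3 : ((fun m : {m : ℤ // m ≤ n} => r ^ (n - (m : ℤ)).toNat * (α / (1 + α))) ∘ e)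
        = fun k : ℕ => r ^ k * (α / (1 + α)) := by
      funext k
      simp only [Function.comp_apply]
      congr 2
      show (n - (n - (k : ℤ))).toNat = k
      omega
    rw [heq3]
    exact (summable_geometric_of_lt_one hr0 hr1).mul_right _
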